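/- An edge contraction T_c of a tree T is dendrogram-lineage-preserving (ancestry among surviving edges coincides in the dendrograms of T and T_c) if and only if for every pair of surviving edges e_i, e_j, the lowest common dendrogram ancestor of e_i and e_j in T is itself a surviving edge of T_c. -/

import Mathlib

open SimpleGraph

variable {V : Type*}

/-- The set of edges lying on the (unique) path between the edges `e` and `f`
of a tree `G`: the edges that belong to every walk traversing both `e` and
`f` (inclusive of `e` and `f` themselves). -/
def betweenEdges (G : SimpleGraph V) (e f : Sym2 V) : Set (Sym2 V) :=
  {g | g ∈ G.edgeSet ∧
    ∀ (a b : V) (p : G.Walk a b), e ∈ p.edges → f ∈ p.edges → g ∈ p.edges}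

/-- `f` is an ancestor of `e` (each edge being an ancestor of itself) in the
single-linkage dendrogram of the weighted tree `(G, w)`, built top-down by
recursively removing the heaviest edge of each connected component:
equivalently, `f` is the heaviest edge on the path between `e` and `f`. -/
def IsAncestor (G : SimpleGraph V) (w : Sym2 V → ℝ) (f e : Sym2 V) : Prop :=
  e ∈ G.edgeSet ∧ f ∈ G.edgeSet ∧ ∀ g ∈ betweenEdges G e f, w g ≤ w f

/-- `m` is the lowest common dendrogram ancestor (LCDA) of edges `e` and `f`:
the deepest node of the dendrogram that is an ancestor of both. -/
def IsLCDA (G : SimpleGraph V) (w : Sym2 V → ℝ) (m e f : Sym2 V) : Prop :=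
  IsAncestor G w m e ∧ IsAncestor G w m f ∧
    ∀ g, IsAncestor G w g e → IsAncestor G w g f → IsAncestor G w g m

/-- The equivalence on vertices generated by identifying the endpoints of each
contracted edge (the edges of `G` belonging to `S`). -/
def contractSetoid (G : SimpleGraph V) (S : Set (Sym2 V)) : Setoid V :=
  ⟨Relation.EqvGen (fun u v => G.Adj u v ∧ s(u, v) ∈ S),
    Relation.EqvGen.is_equivalence _⟩

/-- The tree obtained from `G` by contracting the edges in `S`: the surviving
edges are the edges of `G` not in `S`, viewed between the merged
supervertices. -/
def contractGraph (G : SimpleGraph V) (S : Set (Sym2 V)) :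
    SimpleGraph (Quotient (contractSetoid G S)) where
  Adj x y := x ≠ y ∧ ∃ u v : V, Quotient.mk (contractSetoid G S) u = x ∧
      Quotient.mk (contractSetoid G S) v = y ∧ G.Adj u v ∧ s(u, v) ∉ S
  symm := ⟨by
    rintro x y ⟨hxy, u, v, hu, hv, hadj, hS⟩
    exact ⟨hxy.symm, v, u, hv, hu, hadj.symm, by rwa [Sym2.eq_swap]⟩⟩
  loopless := ⟨fun x h => h.1 rfl⟩

/-- The image of an edge of `G` in the contracted tree. -/
def contractEdge (G : SimpleGraph V) (S : Set (Sym2 V)) :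
    Sym2 V → Sym2 (Quotient (contractSetoid G S)) :=
  Sym2.map (Quotient.mk (contractSetoid G S))
section Aux

open SimpleGraph
variable {V : Type*} {G : SimpleGraph V} {S : Set (Sym2 V)}

lemma betweenEdges_subset_edgeSet {e f : Sym2 V} : betweenEdges G e f ⊆ G.edgeSet :=
  fun _ h => h.1

lemma betweenEdges_comm (G : SimpleGraph V) (e f : Sym2 V) :
    betweenEdges G e f = betweenEdges G f e := by
  ext g
  exact ⟨fun ⟨hg, h⟩ => ⟨hg, fun a b p hf he => h a b p he hf⟩,
    fun ⟨hg, h⟩ => ⟨hg, fun a b p hf he => h a b p he hf⟩⟩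

lemma self_mem_betweenEdges {e f : Sym2 V} (he : e ∈ G.edgeSet) :
    e ∈ betweenEdges G e f := ⟨he, fun _ _ _ hp _ => hp⟩

lemma betweenEdges_mono {e f g : Sym2 V} (hg : g ∈ betweenEdges G e f) :
    betweenEdges G e g ⊆ betweenEdges G e f := by
  rintro x ⟨hx, h⟩
  exact ⟨hx, fun a b p he hf => h a b p he (hg.2 a b p he hf)⟩

lemma not_mem_betweenEdges {x a c : Sym2 V} (hxE : x ∈ G.edgeSet)
    (h : x ∉ betweenEdges G a c) :
    ∃ (u v : V) (p : G.Walk u v), a ∈ p.edges ∧ c ∈ p.edges ∧ x ∉ p.edges := by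
  simp only [betweenEdges, Set.mem_setOf_eq] at h
  push_neg at h
  exact h hxE

lemma betweenEdges_triangle (G : SimpleGraph V) (a b c : Sym2 V) :
    betweenEdges G a b ⊆ betweenEdges G a c ∪ betweenEdges G c b := by
  classical
  induction c using Sym2.ind with
  | _ c1 c2 =>
  intro x hx
  by_contra hx'
  simp only [Set.mem_union, not_or] at hx'
  obtain ⟨h1, h2⟩ := hx'
  obtain ⟨u1, v1, p, ha, hc1, hxp⟩ := not_mem_betweenEdges hx.1 h1
  obtain ⟨u2, v2, q, hc2, hb, hxq⟩ := not_mem_betweenEdges hx.1 h2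
  have hcp : c1 ∈ p.support := p.fst_mem_support_of_mem_edges hc1
  have hcq : c1 ∈ q.support := q.fst_mem_support_of_mem_edges hc2
  have hcp' : c1 ∈ p.reverse.support := by
    rw [SimpleGraph.Walk.support_reverse]; exact List.mem_reverse.2 hcp
  set W := p.append ((p.reverse.takeUntil c1 hcp').append
    (((q.takeUntil c1 hcq).reverse).append q)) with hW
  have haW : a ∈ W.edges := by
    simp only [hW, SimpleGraph.Walk.edges_append, List.mem_append]
    tauto
  have hbW : b ∈ W.edges := by
    simp only [hW, SimpleGraph.Walk.edges_append, List.mem_append]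
    tauto
  have hxW : x ∈ W.edges := hx.2 _ _ W haW hbW
  simp only [hW, SimpleGraph.Walk.edges_append, List.mem_append] at hxW
  rcases hxW with h | h | h | h
  · exact hxp h
  · exact hxp (by
      have := SimpleGraph.Walk.edges_takeUntil_subset p.reverse hcp' h
      rwa [SimpleGraph.Walk.edges_reverse, List.mem_reverse] at this)
  · exact hxq (by
      rw [SimpleGraph.Walk.edges_reverse, List.mem_reverse] at h
      exact SimpleGraph.Walk.edges_takeUntil_subset q hcq h)
  · exact hxq h

lemma betweenEdges_finite (hc : G.Connected) {e f : Sym2 V}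
    (he : e ∈ G.edgeSet) (hf : f ∈ G.edgeSet) : (betweenEdges G e f).Finite := by
  induction e using Sym2.ind with | _ a b =>
  induction f using Sym2.ind with | _ c d =>
  have hab : G.Adj a b := G.mem_edgeSet.1 he
  have hcd : G.Adj c d := G.mem_edgeSet.1 hf
  obtain ⟨p⟩ := hc.preconnected a c
  set W := (SimpleGraph.Walk.cons hab.symm p).concat hcd with hWdef
  refine Set.Finite.subset (List.finite_toSet W.edges) ?_
  intro x hx
  have heW : s(a, b) ∈ W.edges := by
    rw [Sym2.eq_swap]
    simp [hWdef, SimpleGraph.Walk.edges_concat, SimpleGraph.Walk.edges_cons]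
  have hfW : s(c, d) ∈ W.edges := by
    simp only [hWdef, SimpleGraph.Walk.edges_concat, List.concat_eq_append,
      List.mem_append, List.mem_singleton]
    tauto
  exact hx.2 _ _ W heW hfW

lemma exists_max_lcda (hc : G.Connected) (w : Sym2 V → ℝ) {e f : Sym2 V}
    (he : e ∈ G.edgeSet) (hf : f ∈ G.edgeSet) :
    ∃ m ∈ betweenEdges G e f, IsLCDA G w m e f ∧ ∀ g ∈ betweenEdges G e f, w g ≤ w m := by
  obtain ⟨m, hm, hmax0⟩ := Set.Finite.exists_maximalFor w _
    (betweenEdges_finite hc he hf) ⟨e, self_mem_betweenEdges he⟩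
  have hmax : ∀ g ∈ betweenEdges G e f, w g ≤ w m := by
    intro g hg
    rcases le_total (w g) (w m) with h | h
    · exact h
    · exact hmax0 hg h
  have hmE : m ∈ G.edgeSet := betweenEdges_subset_edgeSet hm
  have hm' : m ∈ betweenEdges G f e := by rwa [betweenEdges_comm] at hm
  refine ⟨m, hm, ⟨⟨he, hmE, fun g hg => hmax g (betweenEdges_mono hm hg)⟩,
    ⟨hf, hmE, fun g hg => hmax g (by
      have := betweenEdges_mono hm' hg
      rwa [betweenEdges_comm] at this)⟩, ?_⟩, hmax⟩
  rintro g ⟨heE, hgE, hge⟩ ⟨hfE, _, hgf⟩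
  refine ⟨hmE, hgE, ?_⟩
  intro x hx
  rcases betweenEdges_triangle G m g e hx with hx1 | hx2
  · -- x ∈ betweenEdges G m e
    have hx1' : x ∈ betweenEdges G e m := by rwa [betweenEdges_comm] at hx1
    have hxB : x ∈ betweenEdges G e f := betweenEdges_mono hm hx1'
    rcases betweenEdges_triangle G e f g hxB with hy1 | hy2
    · exact hge x hy1
    · exact hgf x (by rwa [betweenEdges_comm] at hy2)
  · exact hge x hx2

lemma lcda_unique {w : Sym2 V → ℝ} (hw : Set.InjOn w G.edgeSet) {e f g m : Sym2 V}
    (h1 : IsLCDA G w g e f) (h2 : IsLCDA G w m e f) : g = m := by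
  have hgm : IsAncestor G w g m := h2.2.2 g h1.1 h1.2.1
  have hmg : IsAncestor G w m g := h1.2.2 m h2.1 h2.2.1
  have h3 : w m ≤ w g := hgm.2.2 m (self_mem_betweenEdges hgm.1)
  have h4 : w g ≤ w m := hmg.2.2 g (self_mem_betweenEdges hmg.1)
  exact hw hgm.2.1 hgm.1 (le_antisymm h4 h3)

end Aux
section Aux2

open SimpleGraph
variable {V : Type*} {G : SimpleGraph V} {S : Set (Sym2 V)}

lemma exists_S_walk {u v : V}
    (h : Quotient.mk (contractSetoid G S) u = Quotient.mk (contractSetoid G S) v) :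
    ∃ p : G.Walk u v, ∀ g ∈ p.edges, g ∈ S := by
  have h' : Relation.EqvGen (fun u v => G.Adj u v ∧ s(u, v) ∈ S) u v := Quotient.exact h
  clear h
  induction h' with
  | rel a b hab => exact ⟨Walk.cons hab.1 Walk.nil, by simp [hab.2]⟩
  | refl a => exact ⟨Walk.nil, by simp⟩
  | symm a b _ ih =>
    obtain ⟨p, hp⟩ := ih
    refine ⟨p.reverse, ?_⟩
    intro g hg
    rw [Walk.edges_reverse, List.mem_reverse] at hg
    exact hp g hg
  | trans a b c _ _ ih1 ih2 =>
    obtain ⟨p, hp⟩ := ih1; obtain ⟨q, hq⟩ := ih2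
    refine ⟨p.append q, ?_⟩
    intro g hg
    rw [Walk.edges_append, List.mem_append] at hg
    rcases hg with h | h
    exacts [hp g h, hq g h]

lemma quot_ne (hG : G.IsTree) {u v : V} (hadj : G.Adj u v) (hs : s(u, v) ∉ S) :
    Quotient.mk (contractSetoid G S) u ≠ Quotient.mk (contractSetoid G S) v := by
  classical
  intro h
  obtain ⟨p, hp⟩ := exists_S_walk (S := S) h
  have huniq := hG.IsAcyclic.path_unique p.toPath (Path.singleton hadj)
  have hmem : s(u, v) ∈ (p.toPath : G.Walk u v).edges := by
    rw [huniq]; simp [Path.singleton]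
  exact hs (hp _ (p.edges_toPath_subset hmem))

lemma contractEdge_mem (hG : G.IsTree) {e : Sym2 V} (he : e ∈ G.edgeSet) (hs : e ∉ S) :
    contractEdge G S e ∈ (contractGraph G S).edgeSet := by
  induction e using Sym2.ind with | _ u v =>
  have hadj : G.Adj u v := G.mem_edgeSet.1 he
  simp only [contractEdge, Sym2.map_pair_eq]
  exact (contractGraph G S).mem_edgeSet.2 ⟨quot_ne hG hadj hs, u, v, rfl, rfl, hadj, hs⟩

lemma contract_aligned (hG : G.IsTree) {a b u v : V} (hab : G.Adj a b) (hsab : s(a, b) ∉ S)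
    (huv : G.Adj u v)
    (h1 : Quotient.mk (contractSetoid G S) a = Quotient.mk (contractSetoid G S) u)
    (h2 : Quotient.mk (contractSetoid G S) b = Quotient.mk (contractSetoid G S) v) :
    s(a, b) = s(u, v) := by
  classical
  obtain ⟨p1, hp1⟩ := exists_S_walk (S := S) h1
  obtain ⟨p2, hp2⟩ := exists_S_walk (S := S) h2.symm
  set W : G.Walk a b := p1.append (Walk.cons huv p2) with hWdef
  have huniq := hG.IsAcyclic.path_unique W.toPath (Path.singleton hab)
  have hmem : s(a, b) ∈ W.edges := W.edges_toPath_subset (by rw [huniq]; simp [Path.singleton])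
  simp only [hWdef, Walk.edges_append, Walk.edges_cons, List.mem_append, List.mem_cons] at hmem
  rcases hmem with h | h | h
  · exact absurd (hp1 _ h) hsab
  · exact h
  · exact absurd (hp2 _ h) hsab

lemma contractEdge_injOn (hG : G.IsTree) {e h : Sym2 V}
    (he : e ∈ G.edgeSet) (hse : e ∉ S) (hh : h ∈ G.edgeSet) (hsh : h ∉ S)
    (heq : contractEdge G S e = contractEdge G S h) : e = h := by
  induction e using Sym2.ind with | _ a b =>
  induction h using Sym2.ind with | _ u v =>
  have hab := G.mem_edgeSet.1 he
  have huv := G.mem_edgeSet.1 hh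
  simp only [contractEdge, Sym2.map_pair_eq] at heq
  rw [Sym2.eq_iff] at heq
  rcases heq with ⟨h1, h2⟩ | ⟨h1, h2⟩
  · exact contract_aligned hG hab hse huv h1 h2
  · exact (contract_aligned hG hab hse huv.symm h1 h2).trans Sym2.eq_swap

lemma exists_preimage_edge {h : Sym2 (Quotient (contractSetoid G S))}
    (hh : h ∈ (contractGraph G S).edgeSet) :
    ∃ g ∈ G.edgeSet, g ∉ S ∧ contractEdge G S g = h := by
  induction h using Sym2.ind with | _ x y =>
  obtain ⟨-, u, v, hu, hv, huv, hs⟩ := (contractGraph G S).mem_edgeSet.1 hh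
  exact ⟨s(u, v), G.mem_edgeSet.2 huv, hs, by simp only [contractEdge, Sym2.map_pair_eq]; rw [hu, hv]⟩

lemma exists_proj_walk (hG : G.IsTree) {u v : V} (p : G.Walk u v) :
    ∃ q : (contractGraph G S).Walk (Quotient.mk (contractSetoid G S) u)
        (Quotient.mk (contractSetoid G S) v),
      (∀ g ∈ p.edges, g ∉ S → contractEdge G S g ∈ q.edges) ∧
      (∀ h ∈ q.edges, ∃ g ∈ p.edges, g ∉ S ∧ contractEdge G S g = h) := by
  induction p with
  | nil => exact ⟨Walk.nil, by simp, by simp⟩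
  | @cons a b c hadj p ih =>
    obtain ⟨q, hq1, hq2⟩ := ih
    by_cases hs : s(a, b) ∈ S
    · have hab : Quotient.mk (contractSetoid G S) a = Quotient.mk (contractSetoid G S) b :=
        Quotient.sound (Relation.EqvGen.rel _ _ ⟨hadj, hs⟩)
      refine ⟨q.copy hab.symm rfl, ?_, ?_⟩
      · intro g hg hgs
        rw [Walk.edges_copy]
        rw [Walk.edges_cons, List.mem_cons] at hg
        rcases hg with rfl | hg
        · exact absurd hs hgs
        · exact hq1 g hg hgs
      · intro h hh
        rw [Walk.edges_copy] at hh
        obtain ⟨g, hg, hgs, hge⟩ := hq2 h hh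
        exact ⟨g, by rw [Walk.edges_cons, List.mem_cons]; exact Or.inr hg, hgs, hge⟩
    · have hadj' : (contractGraph G S).Adj (Quotient.mk (contractSetoid G S) a)
          (Quotient.mk (contractSetoid G S) b) := ⟨quot_ne hG hadj hs, a, b, rfl, rfl, hadj, hs⟩
      refine ⟨Walk.cons hadj' q, ?_, ?_⟩
      · intro g hg hgs
        rw [Walk.edges_cons, List.mem_cons] at hg
        rw [Walk.edges_cons, List.mem_cons]
        rcases hg with rfl | hg
        · exact Or.inl (by simp only [contractEdge, Sym2.map_pair_eq])
        · exact Or.inr (hq1 g hg hgs)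
      · intro h hh
        rw [Walk.edges_cons, List.mem_cons] at hh
        rcases hh with rfl | hh
        · exact ⟨s(a, b), by simp, hs, by simp only [contractEdge, Sym2.map_pair_eq]⟩
        · obtain ⟨g, hg, h1, h2⟩ := hq2 h hh
          exact ⟨g, by rw [Walk.edges_cons, List.mem_cons]; exact Or.inr hg, h1, h2⟩

lemma exists_lift_walk {x y : Quotient (contractSetoid G S)}
    (q : (contractGraph G S).Walk x y) :
    ∃ p : G.Walk x.out y.out,
      (∀ h ∈ q.edges, ∃ g ∈ G.edgeSet, g ∉ S ∧ contractEdge G S g = h ∧ g ∈ p.edges) ∧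
      (∀ g ∈ p.edges, g ∈ S ∨ (g ∉ S ∧ contractEdge G S g ∈ q.edges)) := by
  induction q with
  | nil => exact ⟨Walk.nil, by simp, by simp⟩
  | @cons x z y hadj q ih =>
    obtain ⟨p, hp1, hp2⟩ := ih
    obtain ⟨hne, u, v, hu, hv, huv, hs⟩ := id hadj
    have e1 : Quotient.mk (contractSetoid G S) x.out = Quotient.mk (contractSetoid G S) u := by
      rw [hu]; exact Quotient.out_eq x
    have e2 : Quotient.mk (contractSetoid G S) v = Quotient.mk (contractSetoid G S) z.out := by
      rw [hv]; exact (Quotient.out_eq z).symm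
    obtain ⟨p1, hs1⟩ := exists_S_walk (S := S) e1
    obtain ⟨p2, hs2⟩ := exists_S_walk (S := S) e2
    refine ⟨p1.append (Walk.cons huv (p2.append p)), ?_, ?_⟩
    · intro h hh
      rw [Walk.edges_cons, List.mem_cons] at hh
      rcases hh with rfl | hh
      · refine ⟨s(u, v), G.mem_edgeSet.2 huv, hs, by simp only [contractEdge, Sym2.map_pair_eq]; rw [hu, hv], ?_⟩
        simp [Walk.edges_append, Walk.edges_cons]
      · obtain ⟨g, hgE, hgs, hge, hgp⟩ := hp1 h hh
        refine ⟨g, hgE, hgs, hge, ?_⟩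
        simp only [Walk.edges_append, Walk.edges_cons, List.mem_append, List.mem_cons]
        tauto
    · intro g hg
      simp only [Walk.edges_append, Walk.edges_cons, List.mem_append, List.mem_cons] at hg
      rcases hg with hg | rfl | hg | hg
      · exact Or.inl (hs1 g hg)
      · refine Or.inr ⟨hs, ?_⟩
        rw [Walk.edges_cons, List.mem_cons]
        exact Or.inl (by simp only [contractEdge, Sym2.map_pair_eq]; rw [hu, hv])
      · exact Or.inl (hs2 g hg)
      · rcases hp2 g hg with h | ⟨h1, h2⟩
        · exact Or.inl h
        · exact Or.inr ⟨h1, by rw [Walk.edges_cons, List.mem_cons]; exact Or.inr h2⟩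

end Aux2
section Aux3

open SimpleGraph
variable {V : Type*} {G : SimpleGraph V} {S : Set (Sym2 V)}

lemma betweenEdges_contract (hG : G.IsTree) {e f : Sym2 V}
    (he : e ∈ G.edgeSet) (hf : f ∈ G.edgeSet) (hse : e ∉ S) (hsf : f ∉ S) :
    betweenEdges (contractGraph G S) (contractEdge G S e) (contractEdge G S f)
      = contractEdge G S '' (betweenEdges G e f \ S) := by
  ext h
  constructor
  · rintro ⟨hhE, hwalk⟩
    obtain ⟨g, hgE, hgs, rfl⟩ := exists_preimage_edge hhE
    refine ⟨g, ⟨⟨hgE, ?_⟩, hgs⟩, rfl⟩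
    intro a b p hep hfp
    obtain ⟨q, hq1, hq2⟩ := exists_proj_walk hG p
    have h3 := hwalk _ _ q (hq1 e hep hse) (hq1 f hfp hsf)
    obtain ⟨g2, hg2p, hg2s, hg2e⟩ := hq2 _ h3
    have hgg : g2 = g := contractEdge_injOn hG (p.edges_subset_edgeSet hg2p) hg2s hgE hgs hg2e
    rwa [← hgg]
  · rintro ⟨g, ⟨⟨hgE, hgB⟩, hgs⟩, rfl⟩
    refine ⟨contractEdge_mem hG hgE hgs, ?_⟩
    intro a b q heq hfq
    obtain ⟨p, hp1, hp2⟩ := exists_lift_walk q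
    obtain ⟨g1, hg1E, hg1s, hg1e, hg1p⟩ := hp1 _ heq
    obtain ⟨g2, hg2E, hg2s, hg2e, hg2p⟩ := hp1 _ hfq
    have he1 : g1 = e := contractEdge_injOn hG hg1E hg1s he hse hg1e
    have he2 : g2 = f := contractEdge_injOn hG hg2E hg2s hf hsf hg2e
    rw [he1] at hg1p
    rw [he2] at hg2p
    have hgp := hgB _ _ p hg1p hg2p
    rcases hp2 g hgp with hcon | ⟨-, hq⟩
    · exact absurd hcon hgs
    · exact hq

lemma isAncestor_contract_iff (hG : G.IsTree)
    (w : Sym2 V → ℝ) (w' : Sym2 (Quotient (contractSetoid G S)) → ℝ)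
    (hw' : ∀ e ∈ G.edgeSet, e ∉ S → w' (contractEdge G S e) = w e)
    {ei ej : Sym2 V} (hi : ei ∈ G.edgeSet) (hj : ej ∈ G.edgeSet)
    (hsi : ei ∉ S) (hsj : ej ∉ S) :
    IsAncestor (contractGraph G S) w' (contractEdge G S ei) (contractEdge G S ej) ↔
      ∀ g ∈ betweenEdges G ej ei, g ∉ S → w g ≤ w ei := by
  constructor
  · rintro ⟨-, -, hmax⟩ g hg hgs
    have hmem : contractEdge G S g ∈
        betweenEdges (contractGraph G S) (contractEdge G S ej) (contractEdge G S ei) := by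
      rw [betweenEdges_contract hG hj hi hsj hsi]
      exact ⟨g, ⟨hg, hgs⟩, rfl⟩
    have hle := hmax _ hmem
    rwa [hw' g hg.1 hgs, hw' ei hi hsi] at hle
  · intro hcond
    refine ⟨contractEdge_mem hG hj hsj, contractEdge_mem hG hi hsi, ?_⟩
    intro h hh
    rw [betweenEdges_contract hG hj hi hsj hsi] at hh
    obtain ⟨g, ⟨hg, hgs⟩, rfl⟩ := hh
    rw [hw' g hg.1 hgs, hw' ei hi hsi]
    exact hcond g hg hgs

end Aux3
/-- An edge contraction `T_c` of a tree `T` with distinct edge weights is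
dendrogram-lineage-preserving (ancestry among surviving edges coincides in the
dendrograms of `T` and `T_c`) if and only if for every pair of surviving edges
`e_i`, `e_j`, the lowest common dendrogram ancestor of `e_i` and `e_j` in `T`
is itself a surviving edge. -/
theorem lineage_preserving_iff_lcda_closed (G : SimpleGraph V) (hG : G.IsTree)
    (w : Sym2 V → ℝ) (hw : Set.InjOn w G.edgeSet)
    (S : Set (Sym2 V)) (hS : S ⊆ G.edgeSet)
    (w' : Sym2 (Quotient (contractSetoid G S)) → ℝ)
    (hw' : ∀ e ∈ G.edgeSet, e ∉ S → w' (contractEdge G S e) = w e) :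
    (∀ ei ej, ei ∈ G.edgeSet → ej ∈ G.edgeSet → ei ∉ S → ej ∉ S →
        (IsAncestor (contractGraph G S) w' (contractEdge G S ei)
            (contractEdge G S ej) ↔
          IsAncestor G w ei ej)) ↔
      (∀ ei ej, ei ∈ G.edgeSet → ej ∈ G.edgeSet → ei ∉ S → ej ∉ S →
        ∀ g, IsLCDA G w g ei ej → g ∉ S) := by
  constructor
  · -- lineage preserving → LCDA closed
    intro hLP ei ej hi hj hsi hsj g hg
    obtain ⟨m, hmB, hmL, hmax⟩ := exists_max_lcda hG.isConnected w hi hj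
    have hgm : g = m := lcda_unique hw hg hmL
    rw [hgm]
    intro hmS
    have hBfin : (betweenEdges G ei ej).Finite := betweenEdges_finite hG.isConnected hi hj
    have hFne : ((betweenEdges G ei ej) \ S).Nonempty := ⟨ei, self_mem_betweenEdges hi, hsi⟩
    obtain ⟨h, hhF, hhmax0⟩ := Set.Finite.exists_maximalFor w _ hBfin.diff hFne
    have hhmax : ∀ x ∈ (betweenEdges G ei ej) \ S, w x ≤ w h := by
      intro x hx
      rcases le_total (w x) (w h) with h' | h'
      · exact h'
      · exact hhmax0 hx h'
    have hhE : h ∈ G.edgeSet := betweenEdges_subset_edgeSet hhF.1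
    have hhS : h ∉ S := hhF.2
    have hne : h ≠ m := fun hq => hhS (hq ▸ hmS)
    have hmh : w h < w m :=
      lt_of_le_of_ne (hmax h hhF.1)
        (fun hq => hne (hw hhE (betweenEdges_subset_edgeSet hmB) hq))
    rcases betweenEdges_triangle G ei ej h hmB with hm1 | hm2
    · -- m ∈ betweenEdges G ei h ; use pair (h, ei)
      have hiff := hLP h ei hhE hi hhS hsi
      rw [isAncestor_contract_iff hG w w' hw' hhE hi hhS hsi] at hiff
      have htrue : ∀ x ∈ betweenEdges G ei h, x ∉ S → w x ≤ w h := by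
        intro x hx hxs
        exact hhmax x ⟨betweenEdges_mono hhF.1 hx, hxs⟩
      have := (hiff.1 htrue).2.2 m hm1
      exact absurd this (not_le.2 hmh)
    · -- m ∈ betweenEdges G h ej ; use pair (h, ej)
      have hm2' : m ∈ betweenEdges G ej h := by rwa [betweenEdges_comm] at hm2
      have hiff := hLP h ej hhE hj hhS hsj
      rw [isAncestor_contract_iff hG w w' hw' hhE hj hhS hsj] at hiff
      have hhB0 := hhF.1
      have hhB' : h ∈ betweenEdges G ej ei := by rwa [betweenEdges_comm] at hhB0
      have htrue : ∀ x ∈ betweenEdges G ej h, x ∉ S → w x ≤ w h := by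
        intro x hx hxs
        refine hhmax x ⟨?_, hxs⟩
        have := betweenEdges_mono hhB' hx
        rwa [betweenEdges_comm] at this
      have := (hiff.1 htrue).2.2 m hm2'
      exact absurd this (not_le.2 hmh)
  · -- LCDA closed → lineage preserving
    intro hC ei ej hi hj hsi hsj
    rw [isAncestor_contract_iff hG w w' hw' hi hj hsi hsj]
    obtain ⟨m, hmB, hmL, hmax⟩ := exists_max_lcda hG.isConnected w hi hj
    constructor
    · intro hcond
      refine ⟨hj, hi, ?_⟩
      intro g hg
      have hgB : g ∈ betweenEdges G ei ej := by rwa [betweenEdges_comm] at hg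
      have h1 : w g ≤ w m := hmax g hgB
      have hmS : m ∉ S := hC ei ej hi hj hsi hsj m hmL
      have hmB' : m ∈ betweenEdges G ej ei := by rwa [betweenEdges_comm] at hmB
      exact h1.trans (hcond m hmB' hmS)
    · rintro ⟨-, -, hanc⟩ g hg _
      exact hanc g hg
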